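/- Let Φ be proper convex lsc on a Hilbert space with minimal-norm minimizer x*, and suppose x: [t₀,∞) → H satisfies ‖x(t)‖ ≤ ‖x*‖ for all t, Φ(prox_{λ(t)Φ}(x(t))) → min Φ and ‖prox_{λ(t)Φ}(x(t)) − x(t)‖ → 0 as t → ∞. Then x(t) converges strongly to x* as t → ∞. -/

import Mathlib

/-- A convex lsc function whose infimum over the ball `B(0,ρ)` is at most `Φ xstar`
(the global min) attains the value `≤ Φ xstar` at some point of the ball. -/
lemma attain_in_ball {H : Type*} [NormedAddCommGroup H]
    [InnerProductSpace ℝ H] [CompleteSpace H] (Φ : H → ℝ)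
    (hconv : ConvexOn ℝ Set.univ Φ) (hlsc : LowerSemicontinuous Φ)
    (xstar : H) (ρ : ℝ)
    (hne : ∀ δ > 0, ∃ v : H, ‖v‖ ≤ ρ ∧ Φ v ≤ Φ xstar + δ) :
    ∃ q : H, Φ q ≤ Φ xstar ∧ ‖q‖ ≤ ρ := by
  classical
  set S : ℕ → Set H := fun n =>
    Metric.closedBall (0 : H) ρ ∩ Φ ⁻¹' Set.Iic (Φ xstar + 1 / (n + 1)) with hS
  have hSne : ∀ n, (S n).Nonempty := by
    intro n
    obtain ⟨v, hv1, hv2⟩ := hne (1 / (n + 1)) (by positivity)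
    exact ⟨v, by simpa [Metric.mem_closedBall, dist_zero_right] using hv1, hv2⟩
  have hSconv : ∀ n, Convex ℝ (S n) := by
    intro n
    apply (convex_closedBall (0 : H) ρ).inter
    have := hconv.convex_le (Φ xstar + 1 / (n + 1))
    simpa [Set.sep_univ, Set.preimage, Set.Iic] using this
  have hSclosed : ∀ n, IsClosed (S n) := fun n =>
    Metric.isClosed_closedBall.inter (hlsc.isClosed_preimage _)
  have hSmono : ∀ ⦃m n : ℕ⦄, n ≤ m → S m ⊆ S n := by
    intro m n hnm v hv
    have hle : (1 : ℝ) / (m + 1) ≤ 1 / (n + 1) := by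
      apply one_div_le_one_div_of_le (by positivity)
      have : (n : ℝ) ≤ m := Nat.cast_le.2 hnm
      linarith
    refine ⟨hv.1, Set.mem_preimage.2 (Set.mem_Iic.2 ?_)⟩
    have h2 := Set.mem_Iic.1 (Set.mem_preimage.1 hv.2)
    linarith
  -- minimal norm elements
  have hqex : ∀ n, ∃ v ∈ S n, ‖(0 : H) - v‖ = ⨅ w : S n, ‖(0 : H) - w‖ := fun n =>
    exists_norm_eq_iInf_of_complete_convex (hSne n) ((hSclosed n).isComplete)
      (hSconv n) 0
  choose q hqmem hqnorm using hqex
  set d : ℕ → ℝ := fun n => ⨅ w : S n, ‖(0 : H) - w‖ with hd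
  haveI : ∀ n, Nonempty (S n) := fun n => (hSne n).to_subtype
  have hbdd : ∀ n, BddBelow (Set.range fun w : S n => ‖(0 : H) - w‖) :=
    fun n => ⟨0, Set.forall_mem_range.2 fun _ => norm_nonneg _⟩
  have hd_le : ∀ n, ∀ w ∈ S n, d n ≤ ‖w‖ := by
    intro n w hw
    have h := ciInf_le (hbdd n) (⟨w, hw⟩ : S n)
    rwa [zero_sub, norm_neg] at h
  have hqn : ∀ n, ‖q n‖ = d n := by
    intro n; have h := hqnorm n; rwa [zero_sub, norm_neg] at h
  have hd_nonneg : ∀ n, 0 ≤ d n := fun n => (norm_nonneg (q n)).trans (hqn n).le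
  have hd_le_ρ : ∀ n, d n ≤ ρ := by
    intro n
    obtain ⟨v, hv⟩ := hSne n
    exact (hd_le n v hv).trans (by
      simpa [Metric.mem_closedBall, dist_zero_right] using hv.1)
  have hd_mono : Monotone d := by
    intro n m hnm
    have h := hd_le n (q m) (hSmono hnm (hqmem m))
    rwa [hqn m] at h
  set D : ℝ := ⨆ n, d n with hD
  have hdD : ∀ n, d n ≤ D := fun n => le_ciSup ⟨ρ, Set.forall_mem_range.2 hd_le_ρ⟩ n
  have htendD : Filter.Tendsto d Filter.atTop (nhds D) :=
    tendsto_atTop_ciSup hd_mono ⟨ρ, Set.forall_mem_range.2 hd_le_ρ⟩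
  -- q is Cauchy
  have hcauchy : CauchySeq q := by
    rw [Metric.cauchySeq_iff']
    intro ε hε
    set τ : ℝ := ε ^ 2 / (8 * (D + 1)) with hτ
    have hD0 : 0 ≤ D := (hd_nonneg 0).trans (hdD 0)
    have hτpos : 0 < τ := by positivity
    obtain ⟨N, hN⟩ := (htendD.eventually (lt_mem_nhds (by linarith : D - τ < D))).exists
    refine ⟨N, fun n hn => ?_⟩
    have hmid : d N ≤ ‖q n + q N‖ / 2 := by
      have hmem : (1 / 2 : ℝ) • q n + (1 / 2 : ℝ) • q N ∈ S N :=
        (hSconv N) (hSmono hn (hqmem n)) (hqmem N) (by norm_num) (by norm_num)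
          (by norm_num)
      have := hd_le N _ hmem
      calc d N ≤ ‖(1 / 2 : ℝ) • q n + (1 / 2 : ℝ) • q N‖ := this
        _ = ‖q n + q N‖ / 2 := by
            rw [← smul_add, norm_smul]; simp; ring
    have hpar := parallelogram_law_with_norm ℝ (q n) (q N)
    have h1 : ‖q n‖ = d n := hqn n
    have h2 : ‖q N‖ = d N := hqn N
    have h3 : d N ≤ d n := hd_mono hn
    have h4 : d n ≤ D := hdD n
    have h5 : 0 ≤ d N := hd_nonneg N
    have hab2 : 4 * d N ^ 2 ≤ ‖q n + q N‖ * ‖q n + q N‖ := by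
      nlinarith [norm_nonneg (q n + q N), hmid, h5]
    have hs1 : d n - d N ≤ τ := by linarith
    have hs2 : 0 ≤ d n + d N := by linarith
    have hs3 : d n + d N ≤ 2 * (D + 1) := by linarith
    have hτle : (d n - d N) * (d n + d N) ≤ τ * (2 * (D + 1)) :=
      mul_le_mul hs1 hs3 hs2 (le_of_lt hτpos)
    have hD1 : (D : ℝ) + 1 ≠ 0 := by positivity
    have hτval : τ * (2 * (D + 1)) = ε ^ 2 / 4 := by
      rw [hτ]; field_simp; ring
    have hε2 : 0 < ε ^ 2 := by positivity
    have h6 : ‖q n - q N‖ * ‖q n - q N‖ < ε ^ 2 := by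
      nlinarith [hab2, hpar, hτle, hτval, hε2]
    have : dist (q n) (q N) = ‖q n - q N‖ := dist_eq_norm _ _
    rw [this]
    nlinarith [norm_nonneg (q n - q N), h6]
  obtain ⟨L, hL⟩ := cauchySeq_tendsto_of_complete hcauchy
  have hLmem : ∀ n, L ∈ S n := by
    intro n
    apply (hSclosed n).mem_of_tendsto hL
    filter_upwards [Filter.eventually_ge_atTop n] with m hm
    exact hSmono hm (hqmem m)
  refine ⟨L, ?_, ?_⟩
  · by_contra h
    push_neg at h
    obtain ⟨n, hn⟩ := exists_nat_one_div_lt (by linarith : (0 : ℝ) < Φ L - Φ xstar)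
    have := (hLmem n).2
    simp only [Set.mem_preimage, Set.mem_Iic] at this
    have : Φ L ≤ Φ xstar + 1 / (n + 1) := this
    linarith
  · have := (hLmem 0).1
    simpa [Metric.mem_closedBall, dist_zero_right] using this

private lemma real_midpoint_est {NUS NU NS IUS IAS ε ε₀ : ℝ}
    (h1 : NUS ^ 2 = NU ^ 2 + 2 * IUS + NS ^ 2)
    (husq : NU ^ 2 ≤ (NS + ε₀) ^ 2)
    (hips : 2 * IAS ≤ 2 * NS ^ 2 - ε ^ 2)
    (h2is : IUS ≤ IAS + ε₀ * NS)
    (he3 : ε₀ * (4 * NS + 1) ≤ ε ^ 2 / 2)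
    (hq0 : ε₀ ^ 2 ≤ ε₀) (hnn : 0 ≤ NUS) :
    (NUS / 2) ^ 2 ≤ NS ^ 2 - ε ^ 2 / 8 := by
  nlinarith [h1, husq, hips, h2is, he3, hq0, hnn]

set_option maxHeartbeats 2000000 in
/-- If the trajectory stays in the ball B(0,‖x*‖), Φ(prox(x(t))) → min Φ and
‖prox(x(t)) − x(t)‖ → 0, then x(t) converges strongly to the minimal-norm minimizer x*. -/
theorem strong_convergence_inside_ball {H : Type*} [NormedAddCommGroup H]
    [InnerProductSpace ℝ H] [CompleteSpace H] (Φ : H → ℝ)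
    (hconv : ConvexOn ℝ Set.univ Φ) (hlsc : LowerSemicontinuous Φ)
    (xstar : H) (hxstar : IsMinOn Φ Set.univ xstar)
    (hmin : ∀ y, IsMinOn Φ Set.univ y → ‖xstar‖ ≤ ‖y‖)
    (t₀ : ℝ) (l : ℝ → ℝ) (hl : ∀ t ≥ t₀, 0 < l t)
    (x p : ℝ → H)
    (hp : ∀ t ≥ t₀,
      IsMinOn (fun y => Φ y + ‖x t - y‖ ^ 2 / (2 * l t)) Set.univ (p t))
    (hball : ∀ t ≥ t₀, ‖x t‖ ≤ ‖xstar‖)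
    (hΦ : Filter.Tendsto (fun t => Φ (p t)) Filter.atTop (nhds (Φ xstar)))
    (hdist : Filter.Tendsto (fun t => ‖p t - x t‖) Filter.atTop (nhds 0)) :
    Filter.Tendsto x Filter.atTop (nhds xstar) := by
  rw [Metric.tendsto_nhds]
  intro ε hε
  by_contra hcon
  have hfreq : ∃ᶠ t in Filter.atTop, ε ≤ dist (x t) xstar := by
    rw [Filter.not_eventually] at hcon
    refine hcon.mono fun t ht => ?_
    push_neg at ht
    exact ht
  -- the "bad radius"
  set ρ : ℝ := Real.sqrt (‖xstar‖ ^ 2 - ε ^ 2 / 8) with hρ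
  set ε₀ : ℝ := min 1 (ε ^ 2 / (2 * (4 * ‖xstar‖ + 1))) with hε₀
  have hε₀pos : 0 < ε₀ := by
    apply lt_min one_pos
    positivity
  -- key: for every δ > 0 there is a point of small norm with small value
  have key : ∀ δ > 0, ∃ v : H, ‖v‖ ^ 2 ≤ ‖xstar‖ ^ 2 - ε ^ 2 / 8 ∧
      Φ v ≤ Φ xstar + δ := by
    intro δ hδ
    have hev1 : ∀ᶠ t in Filter.atTop, Φ (p t) < Φ xstar + δ :=
      hΦ.eventually (gt_mem_nhds (by linarith))
    have hev2 : ∀ᶠ t in Filter.atTop, ‖p t - x t‖ < ε₀ :=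
      hdist.eventually (gt_mem_nhds hε₀pos)
    have hev3 : ∀ᶠ t in Filter.atTop, t ≥ t₀ := Filter.eventually_ge_atTop t₀
    obtain ⟨t, ht, h1, h2, h3⟩ :=
      (hfreq.and_eventually (hev1.and (hev2.and hev3))).exists
    set a := x t
    set u := p t
    set s := xstar
    refine ⟨(1 / 2 : ℝ) • (u + s), ?_, ?_⟩
    · -- norm estimate
      have hes : ‖a - s‖ ≥ ε := by rwa [← dist_eq_norm]
      have hball' : ‖a‖ ≤ ‖s‖ := hball t h3
      have hinner1 : ‖u + s‖ ^ 2 = ‖u‖ ^ 2 + 2 * inner ℝ u s + ‖s‖ ^ 2 :=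
        norm_add_sq_real u s
      have hinner2 : ‖a - s‖ ^ 2 = ‖a‖ ^ 2 - 2 * inner ℝ a s + ‖s‖ ^ 2 :=
        norm_sub_sq_real a s
      have hinner3 : (inner ℝ (u - a) s : ℝ) ≤ ‖u - a‖ * ‖s‖ := real_inner_le_norm _ _
      have hinner4 : (inner ℝ u s : ℝ) = inner ℝ a s + inner ℝ (u - a) s := by
        rw [inner_sub_left]; ring
      have hnu : ‖u‖ ≤ ‖a‖ + ‖u - a‖ := by
        calc ‖u‖ = ‖a + (u - a)‖ := by congr 1; abel
          _ ≤ ‖a‖ + ‖u - a‖ := norm_add_le _ _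
      have hε₀1 : ε₀ ≤ 1 := min_le_left _ _
      have hε₀2 : ε₀ ≤ ε ^ 2 / (2 * (4 * ‖s‖ + 1)) := min_le_right _ _
      have hε₀3 : ε₀ * (4 * ‖s‖ + 1) ≤ ε ^ 2 / 2 := by
        have h := (le_div_iff₀ (by positivity : (0:ℝ) < 2 * (4 * ‖s‖ + 1))).1 hε₀2
        nlinarith [h]
      have hnrm : ‖(1 / 2 : ℝ) • (u + s)‖ = ‖u + s‖ / 2 := by
        rw [norm_smul]; simp; ring
      rw [hnrm]
      have hua : ‖u - a‖ ≤ ε₀ := le_of_lt h2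
      have h0a : 0 ≤ ‖u - a‖ := norm_nonneg _
      have h0s : 0 ≤ ‖s‖ := norm_nonneg _
      have h0ua : 0 ≤ ‖a‖ := norm_nonneg _
      have hasq : ε ^ 2 ≤ ‖a - s‖ ^ 2 := pow_le_pow_left₀ hε.le hes 2
      have hansq : ‖a‖ ^ 2 ≤ ‖s‖ ^ 2 := pow_le_pow_left₀ h0ua hball' 2
      have husq : ‖u‖ ^ 2 ≤ (‖s‖ + ε₀) ^ 2 :=
        pow_le_pow_left₀ (norm_nonneg u) (by linarith) 2
      have hips : 2 * (inner ℝ a s : ℝ) ≤ 2 * ‖s‖ ^ 2 - ε ^ 2 := by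
        nlinarith [hinner2, hasq, hansq]
      have h2is : (inner ℝ u s : ℝ) ≤ inner ℝ a s + ε₀ * ‖s‖ := by
        nlinarith [hinner3, hinner4, mul_le_mul_of_nonneg_right hua h0s]
      have hq0 : ε₀ ^ 2 ≤ ε₀ := by nlinarith [hε₀1, hε₀pos]
      exact real_midpoint_est hinner1 husq hips h2is hε₀3 hq0 (norm_nonneg (u + s))
    · -- value estimate via convexity
      have := hconv.2 (Set.mem_univ u) (Set.mem_univ s)
        (by norm_num : (0:ℝ) ≤ (1/2:ℝ)) (by norm_num : (0:ℝ) ≤ (1/2:ℝ))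
        (by norm_num : (1/2:ℝ) + (1/2:ℝ) = 1)
      rw [smul_add]
      have hms : Φ s ≤ Φ s := le_refl _
      calc Φ ((1/2:ℝ) • u + (1/2:ℝ) • s) ≤ (1/2) * Φ u + (1/2) * Φ s := by
            simpa using this
        _ ≤ Φ s + δ := by
            have hΦs : Φ s ≤ Φ u := hxstar (Set.mem_univ u)
            linarith [le_of_lt h1]
  -- feed the attainment lemma
  have hne : ∀ δ > 0, ∃ v : H, ‖v‖ ≤ ρ ∧ Φ v ≤ Φ xstar + δ := by
    intro δ hδ
    obtain ⟨v, hv1, hv2⟩ := key δ hδ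
    refine ⟨v, ?_, hv2⟩
    rw [hρ]
    have h0 : 0 ≤ ‖xstar‖ ^ 2 - ε ^ 2 / 8 := le_trans (sq_nonneg ‖v‖) hv1
    exact Real.le_sqrt_of_sq_le hv1
  obtain ⟨q, hq1, hq2⟩ := attain_in_ball Φ hconv hlsc xstar ρ hne
  have hqmin : IsMinOn Φ Set.univ q := by
    intro y _
    exact le_trans hq1 (hxstar (Set.mem_univ y))
  have hxq : ‖xstar‖ ≤ ‖q‖ := hmin q hqmin
  -- contradiction
  obtain ⟨v, hv1, hv2⟩ := key 1 one_pos
  have h0 : 0 ≤ ‖xstar‖ ^ 2 - ε ^ 2 / 8 := le_trans (sq_nonneg ‖v‖) hv1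
  have hρ2 : ρ ^ 2 = ‖xstar‖ ^ 2 - ε ^ 2 / 8 := Real.sq_sqrt h0
  have : ‖xstar‖ ^ 2 ≤ ρ ^ 2 := by
    have := pow_le_pow_left₀ (norm_nonneg xstar) (le_trans hxq hq2) 2
    exact this
  nlinarith [hε]
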